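/- Suppose the error dynamics have shape-preserving upper-bound structure: there exist positive semidefinite matrices W̄ ∈ ℝ^{d×d}, Σ̄ ∈ ℝ^{m×m}, scalars l, b > 0 and ρ ∈ [0,1) such that (i) Σ ⪯ l Σ̄, (ii) B Σ̄ Bᵀ ⪯ b W̄, and (iii) A W̄ Aᵀ ⪯ ρ² W̄, all in the Loewner order, and suppose A is Schur stable so that S_∞ = Σ_{s=0}^{∞} A^s B Σ Bᵀ (Aᵀ)^s exists. Define Ψ = b l / (1 − ρ²) and X̄ = C W̄ Cᵀ. Then X_∞ = C S_∞ Cᵀ satisfies X_∞ ⪯ Ψ · X̄, and consequently λ_max(X_∞) ≤ Ψ · λ_max(X̄). -/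

import Mathlib

open Matrix Filter

private lemma psd_add' {k : Type*} [Fintype k] {P Q : Matrix k k ℝ}
    (hP : P.PosSemidef) (hQ : Q.PosSemidef) : (P + Q).PosSemidef :=
  Matrix.PosSemidef.of_dotProduct_mulVec_nonneg (hP.1.add hQ.1) fun x => by
    rw [add_mulVec, dotProduct_add]
    exact add_nonneg (hP.dotProduct_mulVec_nonneg x) (hQ.dotProduct_mulVec_nonneg x)

private lemma psd_smul' {k : Type*} [Fintype k] {P : Matrix k k ℝ} {c : ℝ} (hc : 0 ≤ c)
    (hP : P.PosSemidef) : (c • P).PosSemidef :=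
  Matrix.PosSemidef.of_dotProduct_mulVec_nonneg
    (by rw [Matrix.IsHermitian, conjTranspose_smul, hP.1.eq, star_trivial]) fun x => by
    rw [smul_mulVec, dotProduct_smul, smul_eq_mul]
    exact mul_nonneg hc (hP.dotProduct_mulVec_nonneg x)

private lemma psd_conj' {k j : Type*} [Fintype k] [Fintype j] {P : Matrix k k ℝ}
    (hP : P.PosSemidef) (M : Matrix j k ℝ) : (M * P * Mᵀ).PosSemidef := by
  have h := hP.mul_mul_conjTranspose_same M
  rwa [conjTranspose_eq_transpose_of_trivial] at h

private lemma psd_sum' {k : Type*} [Fintype k] {ι : Type*} (s : Finset ι)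
    (f : ι → Matrix k k ℝ) (h : ∀ i ∈ s, (f i).PosSemidef) :
    (∑ i ∈ s, f i).PosSemidef := by
  classical
  induction s using Finset.induction with
  | empty => simpa using (Matrix.PosSemidef.zero : (0 : Matrix k k ℝ).PosSemidef)
  | insert _ _ hx ih =>
      rw [Finset.sum_insert hx]
      exact psd_add' (h _ (Finset.mem_insert_self _ _))
        (ih fun i hi => h i (Finset.mem_insert_of_mem hi))

private lemma quad_nonneg' {k : Type*} [Fintype k] {P : Matrix k k ℝ}
    (hP : P.PosSemidef) (x : k → ℝ) : 0 ≤ x ⬝ᵥ P *ᵥ x := by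
  have := hP.dotProduct_mulVec_nonneg x
  rwa [star_trivial] at this

private lemma geom_partial_le' {r : ℝ} (h0 : 0 ≤ r) (h1 : r < 1) (t : ℕ) :
    ∑ s ∈ Finset.range t, r ^ s ≤ 1 / (1 - r) := by
  have hpos : 0 < 1 - r := by linarith
  rw [geom_sum_eq (ne_of_lt h1)]
  have he : (r ^ t - 1) / (r - 1) = (1 - r ^ t) / (1 - r) := by
    rw [← neg_div_neg_eq, neg_sub, neg_sub]
  rw [he, div_le_div_iff₀ hpos hpos]
  have : 0 ≤ r ^ t := pow_nonneg h0 t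
  nlinarith

private lemma quad_le_lmax' {k : ℕ} {M : Matrix (Fin k) (Fin k) ℝ} (hM : M.IsHermitian)
    {c : ℝ} (hc : IsGreatest (Set.range hM.eigenvalues) c) (x : Fin k → ℝ) :
    x ⬝ᵥ M *ᵥ x ≤ c * (x ⬝ᵥ x) := by
  set U : Matrix (Fin k) (Fin k) ℝ := (hM.eigenvectorUnitary : Matrix (Fin k) (Fin k) ℝ)
  have hU : U * star U = 1 := (Matrix.mem_unitaryGroup_iff).mp hM.eigenvectorUnitary.2
  have hkey : c • (1 : Matrix (Fin k) (Fin k) ℝ) - M =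
      U * diagonal (fun i => c - hM.eigenvalues i) * star U := by
    conv_lhs => rw [hM.spectral_theorem]
    have hd : diagonal (fun i => c - hM.eigenvalues i) =
        diagonal (fun _ => c) - diagonal (RCLike.ofReal ∘ hM.eigenvalues) := by
      rw [diagonal_sub]
      congr 1
    rw [hd, Matrix.mul_sub, Matrix.sub_mul]
    congr 1
    rw [← Matrix.smul_one_eq_diagonal, Matrix.mul_smul, Matrix.mul_one, Matrix.smul_mul, hU]
  have hdiag : (diagonal (fun i => c - hM.eigenvalues i)).PosSemidef :=
    Matrix.posSemidef_diagonal_iff.mpr fun i => sub_nonneg.mpr (hc.2 ⟨i, rfl⟩)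
  have hpsd : (c • (1 : Matrix (Fin k) (Fin k) ℝ) - M).PosSemidef := by
    rw [hkey, Matrix.star_eq_conjTranspose]
    exact hdiag.mul_mul_conjTranspose_same U
  have h := quad_nonneg' hpsd x
  rw [sub_mulVec, smul_mulVec, one_mulVec, dotProduct_sub, dotProduct_smul,
    smul_eq_mul] at h
  linarith

/-- **Scalar ordering reduction.**
Under the shape-preserving upper-bound structure `Σ ⪯ l Σ̄`, `B Σ̄ Bᵀ ⪯ b W̄`,
`A W̄ Aᵀ ⪯ ρ² W̄` with `l, b > 0`, `ρ ∈ [0,1)`, and Schur-stable `A`, the stationary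
proxy `X_∞ = C S_∞ Cᵀ` (with `S_∞ = lim_t ∑_{s<t} A^s B Σ Bᵀ (Aᵀ)^s`) satisfies
`X_∞ ⪯ Ψ X̄` where `Ψ = b l / (1 − ρ²)` and `X̄ = C W̄ Cᵀ`; consequently
`λ_max(X_∞) ≤ Ψ λ_max(X̄)`. -/
theorem scalar_ordering_reduction
    {d m n : ℕ}
    (A : Matrix (Fin d) (Fin d) ℝ) (B : Matrix (Fin d) (Fin m) ℝ)
    (C : Matrix (Fin n) (Fin d) ℝ)
    (Sg : Matrix (Fin m) (Fin m) ℝ) (hSg : Sg.PosSemidef)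
    (hA : ∀ z ∈ spectrum ℂ (A.map (algebraMap ℝ ℂ)), ‖z‖ < 1)
    (Wbar : Matrix (Fin d) (Fin d) ℝ) (hWbar : Wbar.PosSemidef)
    (Sbar : Matrix (Fin m) (Fin m) ℝ) (hSbar : Sbar.PosSemidef)
    (l b : ℝ) (hl : 0 < l) (hb : 0 < b)
    (ρ : ℝ) (hρ0 : 0 ≤ ρ) (hρ1 : ρ < 1)
    (hlabel : (l • Sbar - Sg).PosSemidef)
    (hinj : (b • Wbar - B * Sbar * Bᵀ).PosSemidef)
    (hcontr : (ρ ^ 2 • Wbar - A * Wbar * Aᵀ).PosSemidef)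
    (Sinf : Matrix (Fin d) (Fin d) ℝ)
    (hSinf : Tendsto (fun t => ∑ s ∈ Finset.range t, A ^ s * (B * Sg * Bᵀ) * (Aᵀ) ^ s)
      atTop (nhds Sinf))
    (hXinf : (C * Sinf * Cᵀ).IsHermitian)
    (hXbar : (C * Wbar * Cᵀ).IsHermitian)
    (lmaxXinf lmaxXbar : ℝ)
    (hlXinf : IsGreatest (Set.range hXinf.eigenvalues) lmaxXinf)
    (hlXbar : IsGreatest (Set.range hXbar.eigenvalues) lmaxXbar) :
    ((b * l / (1 - ρ ^ 2)) • (C * Wbar * Cᵀ) - C * Sinf * Cᵀ).PosSemidef ∧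
      lmaxXinf ≤ (b * l / (1 - ρ ^ 2)) * lmaxXbar := by
  set X : Matrix (Fin d) (Fin d) ℝ := B * Sg * Bᵀ with hX
  set Ψ : ℝ := b * l / (1 - ρ ^ 2) with hΨdef
  have hρ2 : ρ ^ 2 < 1 := by nlinarith
  have hρ2' : (0:ℝ) < 1 - ρ ^ 2 := by linarith
  have hΨpos : 0 < Ψ := div_pos (mul_pos hb hl) hρ2'
  -- step 0
  have step0 : ((b * l) • Wbar - X).PosSemidef := by
    have h1 : (B * (l • Sbar - Sg) * Bᵀ).PosSemidef := psd_conj' hlabel B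
    have e1 : B * (l • Sbar - Sg) * Bᵀ = l • (B * Sbar * Bᵀ) - X := by
      rw [Matrix.mul_sub, Matrix.sub_mul, Matrix.mul_smul, Matrix.smul_mul]
    rw [e1] at h1
    have h2 : (l • (b • Wbar - B * Sbar * Bᵀ)).PosSemidef := psd_smul' hl.le hinj
    have e2 : (b * l) • Wbar - X =
        l • (b • Wbar - B * Sbar * Bᵀ) + (l • (B * Sbar * Bᵀ) - X) := by
      module
    rw [e2]
    exact psd_add' h2 h1
  -- induction step
  have key : ∀ s : ℕ, ((b * l * ρ ^ (2 * s)) • Wbar - A ^ s * X * (Aᵀ) ^ s).PosSemidef := by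
    intro s
    induction s with
    | zero => simpa using step0
    | succ s ih =>
        have hconj : (A * ((b * l * ρ ^ (2 * s)) • Wbar - A ^ s * X * (Aᵀ) ^ s) * Aᵀ).PosSemidef :=
          psd_conj' ih A
        have e : A * ((b * l * ρ ^ (2 * s)) • Wbar - A ^ s * X * (Aᵀ) ^ s) * Aᵀ =
            (b * l * ρ ^ (2 * s)) • (A * Wbar * Aᵀ) - A ^ (s + 1) * X * (Aᵀ) ^ (s + 1) := by
          rw [pow_succ' A, pow_succ (Aᵀ)]
          rw [Matrix.mul_sub, Matrix.sub_mul, Matrix.mul_smul, Matrix.smul_mul]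
          noncomm_ring
        rw [e] at hconj
        have hc0 : 0 ≤ b * l * ρ ^ (2 * s) := by positivity
        have hsm : ((b * l * ρ ^ (2 * s)) • (ρ ^ 2 • Wbar - A * Wbar * Aᵀ)).PosSemidef :=
          psd_smul' hc0 hcontr
        have e2 : (b * l * ρ ^ (2 * (s + 1))) • Wbar - A ^ (s + 1) * X * (Aᵀ) ^ (s + 1) =
            ((b * l * ρ ^ (2 * s)) • (A * Wbar * Aᵀ) - A ^ (s + 1) * X * (Aᵀ) ^ (s + 1)) +
              (b * l * ρ ^ (2 * s)) • (ρ ^ 2 • Wbar - A * Wbar * Aᵀ) := by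
          have hcoef : b * l * ρ ^ (2 * (s + 1)) = (b * l * ρ ^ (2 * s)) * ρ ^ 2 := by ring
          rw [hcoef]
          module
        rw [e2]
        exact psd_add' hconj hsm
  -- hpartial sums
  have hpartial : ∀ t : ℕ,
      (Ψ • Wbar - ∑ s ∈ Finset.range t, A ^ s * X * (Aᵀ) ^ s).PosSemidef := by
    intro t
    have e : Ψ • Wbar - ∑ s ∈ Finset.range t, A ^ s * X * (Aᵀ) ^ s =
        (Ψ - ∑ s ∈ Finset.range t, b * l * ρ ^ (2 * s)) • Wbar +
          ∑ s ∈ Finset.range t, ((b * l * ρ ^ (2 * s)) • Wbar - A ^ s * X * (Aᵀ) ^ s) := by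
      rw [Finset.sum_sub_distrib, ← Finset.sum_smul, sub_smul]
      abel
    have hcoef : 0 ≤ Ψ - ∑ s ∈ Finset.range t, b * l * ρ ^ (2 * s) := by
      have h1 : ∑ s ∈ Finset.range t, b * l * ρ ^ (2 * s) =
          (b * l) * ∑ s ∈ Finset.range t, (ρ ^ 2) ^ s := by
        rw [Finset.mul_sum]
        exact Finset.sum_congr rfl fun s _ => by rw [pow_mul]
      have h2 : ∑ s ∈ Finset.range t, (ρ ^ 2) ^ s ≤ 1 / (1 - ρ ^ 2) :=
        geom_partial_le' (by positivity) hρ2 t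
      have h3 : (b * l) * ∑ s ∈ Finset.range t, (ρ ^ 2) ^ s ≤ Ψ := by
        rw [hΨdef, div_eq_mul_one_div]
        exact mul_le_mul_of_nonneg_left h2 (by positivity)
      linarith [h1 ▸ h3]
    rw [e]
    exact psd_add' (psd_smul' hcoef hWbar) (psd_sum' _ _ fun s _ => key s)
  -- pass to the limit
  have hD : Tendsto (fun t => Ψ • Wbar - ∑ s ∈ Finset.range t, A ^ s * X * (Aᵀ) ^ s)
      atTop (nhds (Ψ • Wbar - Sinf)) := tendsto_const_nhds.sub hSinf
  have hermD : (Ψ • Wbar - Sinf).IsHermitian := by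
    have hcont : Continuous fun M : Matrix (Fin d) (Fin d) ℝ => Mᴴ :=
      continuous_id.matrix_conjTranspose
    have h1 : Tendsto (fun t => (Ψ • Wbar - ∑ s ∈ Finset.range t, A ^ s * X * (Aᵀ) ^ s)ᴴ)
        atTop (nhds ((Ψ • Wbar - Sinf)ᴴ)) := (hcont.tendsto _).comp hD
    have h2 : (fun t => (Ψ • Wbar - ∑ s ∈ Finset.range t, A ^ s * X * (Aᵀ) ^ s)ᴴ) =
        fun t => Ψ • Wbar - ∑ s ∈ Finset.range t, A ^ s * X * (Aᵀ) ^ s :=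
      funext fun t => (hpartial t).1
    rw [h2] at h1
    exact tendsto_nhds_unique h1 hD
  have hDpsd : (Ψ • Wbar - Sinf).PosSemidef := by
    refine Matrix.PosSemidef.of_dotProduct_mulVec_nonneg hermD fun x => ?_
    have hcont : Continuous fun M : Matrix (Fin d) (Fin d) ℝ => star x ⬝ᵥ M *ᵥ x :=
      continuous_const.dotProduct (continuous_id.matrix_mulVec continuous_const)
    exact ge_of_tendsto' ((hcont.tendsto _).comp hD) fun t => (hpartial t).dotProduct_mulVec_nonneg x
  -- conjugate by C
  have hfin : (C * (Ψ • Wbar - Sinf) * Cᵀ).PosSemidef := psd_conj' hDpsd C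
  have efin : C * (Ψ • Wbar - Sinf) * Cᵀ = Ψ • (C * Wbar * Cᵀ) - C * Sinf * Cᵀ := by
    rw [Matrix.mul_sub, Matrix.sub_mul, Matrix.mul_smul, Matrix.smul_mul]
  rw [efin] at hfin
  refine ⟨hfin, ?_⟩
  -- eigenvalue bound
  obtain ⟨i, hi⟩ := hlXinf.1
  set v : Fin n → ℝ := ⇑(hXinf.eigenvectorBasis i) with hv
  have hnorm : v ⬝ᵥ v = 1 := by
    have h1 : ‖hXinf.eigenvectorBasis i‖ = 1 := hXinf.eigenvectorBasis.orthonormal.1 i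
    have h2 : v ⬝ᵥ v = @inner ℝ _ _ (hXinf.eigenvectorBasis i) (hXinf.eigenvectorBasis i) := by
      simp only [hv, dotProduct, PiLp.inner_apply, RCLike.inner_apply, conj_trivial]
    rw [h2, real_inner_self_eq_norm_sq, h1]
    norm_num
  have heig : v ⬝ᵥ (C * Sinf * Cᵀ) *ᵥ v = lmaxXinf := by
    have h := hXinf.eigenvalues_eq i
    rw [hi] at h
    simpa [hv] using h.symm
  have h1 : v ⬝ᵥ (C * Sinf * Cᵀ) *ᵥ v ≤ Ψ * (v ⬝ᵥ (C * Wbar * Cᵀ) *ᵥ v) := by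
    have h := quad_nonneg' hfin v
    rw [sub_mulVec, smul_mulVec, dotProduct_sub, dotProduct_smul, smul_eq_mul] at h
    linarith
  have h2 : v ⬝ᵥ (C * Wbar * Cᵀ) *ᵥ v ≤ lmaxXbar * (v ⬝ᵥ v) := quad_le_lmax' hXbar hlXbar v
  rw [hnorm, mul_one] at h2
  calc lmaxXinf = v ⬝ᵥ (C * Sinf * Cᵀ) *ᵥ v := heig.symm
    _ ≤ Ψ * (v ⬝ᵥ (C * Wbar * Cᵀ) *ᵥ v) := h1
    _ ≤ Ψ * lmaxXbar := mul_le_mul_of_nonneg_left h2 hΨpos.le
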